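/- Let L be an m×n real matrix of rank r with compact SVD L = W Σ Vᵀ, satisfying μ₂-row incoherence: max_i ‖Vᵀeᵢ‖₂ ≤ √(μ₂ r/n). Let J ⊆ [n] with C = L(:,J) of rank r, and let C = W_C Σ_C V_Cᵀ be its compact SVD. Then for every index i, ‖V_Cᵀ eᵢ‖₂ ≤ κ(L) · (‖C†‖₂ / ‖L†‖₂) · √(μ₂ r / n), where κ(L) = σ_max(L)/σ_min(L) and † denotes Moore–Penrose pseudoinverse. -/

import Mathlib

open Matrix BigOperators MeasureTheory

set_option maxHeartbeats 1000000

noncomputable def specNorm {m n : ℕ} (A : Matrix (Fin m) (Fin n) ℝ) : ℝ :=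
  ‖LinearMap.toContinuousLinearMap (Matrix.toEuclideanLin A)‖

def IsMPInv {m n : ℕ} (A : Matrix (Fin m) (Fin n) ℝ) (B : Matrix (Fin n) (Fin m) ℝ) : Prop :=
  A * B * A = A ∧ B * A * B = B ∧ (A * B)ᵀ = A * B ∧ (B * A)ᵀ = B * A

noncomputable def rowNorm {m n : ℕ} (A : Matrix (Fin m) (Fin n) ℝ) (i : Fin m) : ℝ :=
  Real.sqrt (∑ j, (A i j) ^ 2)

noncomputable def entryMax {m n : ℕ} (A : Matrix (Fin m) (Fin n) ℝ) : ℝ :=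
  ⨆ i, ⨆ j, |A i j|

lemma ev_norm {n : ℕ} (v : Fin n → ℝ) :
    ‖(WithLp.equiv 2 (Fin n → ℝ)).symm v‖ = Real.sqrt (∑ j, (v j) ^ 2) := by
  rw [EuclideanSpace.norm_eq]
  congr 1
  exact Finset.sum_congr rfl fun j _ => by
    rw [WithLp.equiv_symm_apply, WithLp.ofLp_toLp, Real.norm_eq_abs, sq_abs]

lemma specNorm_nonneg {m n : ℕ} (A : Matrix (Fin m) (Fin n) ℝ) : 0 ≤ specNorm A :=
  norm_nonneg _

lemma mulVec_norm_le {m n : ℕ} (A : Matrix (Fin m) (Fin n) ℝ) (v : Fin n → ℝ) :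
    ‖(WithLp.equiv 2 (Fin m → ℝ)).symm (A *ᵥ v)‖ ≤
      specNorm A * ‖(WithLp.equiv 2 (Fin n → ℝ)).symm v‖ := by
  have := (LinearMap.toContinuousLinearMap (Matrix.toEuclideanLin A)).le_opNorm
    ((WithLp.equiv 2 (Fin n → ℝ)).symm v)
  simpa [Matrix.toEuclideanLin_apply, specNorm] using this

lemma mulVec_norm_eq {n r : ℕ} (A : Matrix (Fin n) (Fin r) ℝ) (h : Aᵀ * A = 1)
    (v : Fin r → ℝ) :
    ‖(WithLp.equiv 2 (Fin n → ℝ)).symm (A *ᵥ v)‖ = ‖(WithLp.equiv 2 (Fin r → ℝ)).symm v‖ := by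
  rw [ev_norm, ev_norm]
  congr 1
  have key : (A *ᵥ v) ⬝ᵥ (A *ᵥ v) = v ⬝ᵥ v := by
    rw [Matrix.dotProduct_mulVec, ← Matrix.mulVec_transpose, Matrix.mulVec_mulVec, h,
      Matrix.one_mulVec]
  simpa [dotProduct, sq] using key

theorem stmt1 (m n r k : ℕ) (μ₂ : ℝ)
    (L : Matrix (Fin m) (Fin n) ℝ)
    (W : Matrix (Fin m) (Fin r) ℝ) (σ : Fin r → ℝ) (V : Matrix (Fin n) (Fin r) ℝ)
    (hW : Wᵀ * W = 1) (hV : Vᵀ * V = 1) (hσ : ∀ i, 0 < σ i)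
    (hL : L = W * Matrix.diagonal σ * Vᵀ)
    (hrank : L.rank = r)
    (hinc : ∀ i, rowNorm V i ≤ Real.sqrt (μ₂ * r / n))
    (g : Fin k → Fin n) (hg : Function.Injective g)
    (C : Matrix (Fin m) (Fin k) ℝ) (hC : C = L.submatrix id g)
    (hCrank : C.rank = r)
    (WC : Matrix (Fin m) (Fin r) ℝ) (σC : Fin r → ℝ) (VC : Matrix (Fin k) (Fin r) ℝ)
    (hWC : WCᵀ * WC = 1) (hVC : VCᵀ * VC = 1) (hσC : ∀ i, 0 < σC i)
    (hCSVD : C = WC * Matrix.diagonal σC * VCᵀ)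
    (Cd : Matrix (Fin k) (Fin m) ℝ) (hCd : IsMPInv C Cd)
    (Ld : Matrix (Fin n) (Fin m) ℝ) (hLd : IsMPInv L Ld) :
    ∀ i, rowNorm VC i ≤
      (specNorm L * specNorm Ld) * (specNorm Cd / specNorm Ld) * Real.sqrt (μ₂ * r / n) := by
  intro i
  have hsq : (0:ℝ) ≤ Real.sqrt (μ₂ * r / n) := Real.sqrt_nonneg _
  rcases Nat.eq_zero_or_pos r with hr | hr
  · subst hr
    have h0 : rowNorm VC i = 0 := by simp [rowNorm]
    rw [h0]
    have h1 : (0:ℝ) ≤ specNorm Cd / specNorm Ld :=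
      div_nonneg (specNorm_nonneg _) (specNorm_nonneg _)
    exact mul_nonneg (mul_nonneg (mul_nonneg (specNorm_nonneg _) (specNorm_nonneg _)) h1) hsq
  -- r > 0 : Ld ≠ 0
  have hLne : L ≠ 0 := by
    intro h
    rw [h, Matrix.rank_zero] at hrank
    omega
  have hLdne : Ld ≠ 0 := by
    intro h
    apply hLne
    have := hLd.1
    rw [h] at this
    simpa using this.symm
  have hLdpos : 0 < specNorm Ld := by
    rw [specNorm, norm_pos_iff]
    intro h
    apply hLdne
    have h2 : Matrix.toEuclideanLin Ld = 0 := by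
      apply LinearMap.toContinuousLinearMap.injective
      simpa using h
    simpa using Matrix.toEuclideanLin.injective (by simpa using h2)
  -- key identity: Cd * C = VC * VCᵀ
  have hD : IsUnit (Matrix.diagonal σC).det := by
    rw [Matrix.det_diagonal]
    exact (Finset.prod_pos (fun i _ => hσC i)).ne'.isUnit
  have hP : Cd * C = VC * VCᵀ := by
    set D := Matrix.diagonal σC with hDdef
    set P := Cd * C with hPdef
    have hCP : C * P = C := by rw [hPdef, ← Matrix.mul_assoc]; exact hCd.1
    have hWCC : WCᵀ * C = D * VCᵀ := by
      rw [hCSVD, ← Matrix.mul_assoc, ← Matrix.mul_assoc, hWC, Matrix.one_mul]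
    have t1 : D * VCᵀ * P = D * VCᵀ := by
      rw [← hWCC, Matrix.mul_assoc WCᵀ C P, hCP]
    have h1 : VCᵀ * P = VCᵀ := by
      have h2 := congrArg (fun X => D⁻¹ * X) t1
      simp only [← Matrix.mul_assoc] at h2
      rwa [Matrix.nonsing_inv_mul _ hD, Matrix.one_mul] at h2
    have hPsymm : Pᵀ = P := hCd.2.2.2
    have h3 : P = VC * (D * WCᵀ * Cdᵀ) := by
      have h4 : Pᵀ = Cᵀ * Cdᵀ := by rw [hPdef, Matrix.transpose_mul]
      rw [← hPsymm, h4, hCSVD]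
      simp only [Matrix.transpose_mul, Matrix.transpose_transpose, hDdef,
        Matrix.diagonal_transpose, Matrix.mul_assoc]
    have h4 : VC * VCᵀ * P = P := by
      rw [h3, ← Matrix.mul_assoc, Matrix.mul_assoc VC VCᵀ VC, hVC, Matrix.mul_one]
    have h5 : VC * VCᵀ * P = VC * VCᵀ := by
      rw [Matrix.mul_assoc, h1]
    rw [← h4, h5]
  -- vector identities
  have hrowVC : rowNorm VC i = ‖(WithLp.equiv 2 (Fin k → ℝ)).symm ((Cd * C) *ᵥ Pi.single i 1)‖ := by
    rw [hP, ← Matrix.mulVec_mulVec, mulVec_norm_eq VC hVC, Matrix.mulVec_single_one,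
      ev_norm, rowNorm]
    congr 1
  have hcol : C *ᵥ Pi.single i 1 = L *ᵥ Pi.single (g i) 1 := by
    rw [Matrix.mulVec_single_one, Matrix.mulVec_single_one]
    ext j
    simp [hC]
  have hLVV : L * (V * Vᵀ) = L := by
    nth_rewrite 1 [hL]
    rw [Matrix.mul_assoc (W * Matrix.diagonal σ) Vᵀ (V * Vᵀ), ← Matrix.mul_assoc Vᵀ V Vᵀ, hV,
      Matrix.one_mul, ← hL]
  have hLV : L *ᵥ Pi.single (g i) 1 = L *ᵥ (V *ᵥ (V (g i))) := by
    conv_lhs => rw [← hLVV]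
    rw [← Matrix.mulVec_mulVec, ← Matrix.mulVec_mulVec, Matrix.mulVec_single_one]
    congr 1
  have hrowV : ‖(WithLp.equiv 2 (Fin r → ℝ)).symm (V (g i))‖ = rowNorm V (g i) := by
    rw [ev_norm, rowNorm]
  -- main estimate
  have key : rowNorm VC i ≤ specNorm Cd * (specNorm L * rowNorm V (g i)) := by
    rw [hrowVC, ← Matrix.mulVec_mulVec, hcol, hLV]
    calc ‖(WithLp.equiv 2 (Fin k → ℝ)).symm (Cd *ᵥ (L *ᵥ (V *ᵥ V (g i))))‖
        ≤ specNorm Cd * ‖(WithLp.equiv 2 (Fin m → ℝ)).symm (L *ᵥ (V *ᵥ V (g i)))‖ :=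
          mulVec_norm_le Cd _
      _ ≤ specNorm Cd * (specNorm L * rowNorm V (g i)) := by
          apply mul_le_mul_of_nonneg_left _ (specNorm_nonneg Cd)
          calc ‖(WithLp.equiv 2 (Fin m → ℝ)).symm (L *ᵥ (V *ᵥ V (g i)))‖
              ≤ specNorm L * ‖(WithLp.equiv 2 (Fin n → ℝ)).symm (V *ᵥ V (g i))‖ :=
                mulVec_norm_le L _
            _ = specNorm L * rowNorm V (g i) := by rw [mulVec_norm_eq V hV, hrowV]
  -- conclude
  have hrhs : (specNorm L * specNorm Ld) * (specNorm Cd / specNorm Ld) =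
      specNorm L * specNorm Cd := by
    field_simp
  rw [hrhs]
  calc rowNorm VC i ≤ specNorm Cd * (specNorm L * rowNorm V (g i)) := key
    _ ≤ specNorm Cd * (specNorm L * Real.sqrt (μ₂ * r / n)) := by
        apply mul_le_mul_of_nonneg_left _ (specNorm_nonneg Cd)
        exact mul_le_mul_of_nonneg_left (hinc (g i)) (specNorm_nonneg L)
    _ = specNorm L * specNorm Cd * Real.sqrt (μ₂ * r / n) := by ring
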